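/- The groups Γ_T and Γ_D are not isomorphic as groups. (Consequently the platycosms Tetra = ℝ³/Γ_T and Didi = ℝ³/Γ_D, which have these groups as fundamental groups, are not homeomorphic and in particular not isometric.) -/

import Mathlib

noncomputable section

/-- Points of `ℝ³`, written as `(x, y, z)`. -/
abbrev R3 : Type := ℝ × ℝ × ℝ

/-- The translation `T_w : x ↦ x + w` of `ℝ³`, as a bijection (it is an isometry). -/
def transl (w : R3) : Equiv.Perm R3 := Equiv.addRight w

/-- The quarter-turn screw motion `τ(x,y,z) = (−y, x, z+1/2)`, as a bijection
(it is an isometry). -/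
def tauE : Equiv.Perm R3 where
  toFun p := (-p.2.1, p.1, p.2.2 + 1/2)
  invFun p := (p.2.1, -p.1, p.2.2 - 1/2)
  left_inv p := by obtain ⟨x, y, z⟩ := p; simp
  right_inv p := by obtain ⟨x, y, z⟩ := p; simp

/-- The half-turn screw motion `ρ_x(x,y,z) = (x+1/2, −y, −z)`, as a bijection
(it is an isometry). -/
def rhoxE : Equiv.Perm R3 where
  toFun p := (p.1 + 1/2, -p.2.1, -p.2.2)
  invFun p := (p.1 - 1/2, -p.2.1, -p.2.2)
  left_inv p := by obtain ⟨x, y, z⟩ := p; simp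
  right_inv p := by obtain ⟨x, y, z⟩ := p; simp

/-- The half-turn screw motion `ρ_y(x,y,z) = (−x, y+1/2, 1−z)`, as a bijection
(it is an isometry). -/
def rhoyE : Equiv.Perm R3 where
  toFun p := (-p.1, p.2.1 + 1/2, 1 - p.2.2)
  invFun p := (-p.1, p.2.1 - 1/2, 1 - p.2.2)
  left_inv p := by obtain ⟨x, y, z⟩ := p; simp
  right_inv p := by obtain ⟨x, y, z⟩ := p; simp

/-- `Γ_T`, the covering group of the tetracosm Tetra: the group generated by the
translations `T_{(1,0,0)}, T_{(0,1,0)}, T_{(0,0,2)}` and `τ`. -/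
def GammaT : Subgroup (Equiv.Perm R3) :=
  Subgroup.closure {transl (1, 0, 0), transl (0, 1, 0), transl (0, 0, 2), tauE}

/-- `Γ_D`, the covering group of the didicosm Didi: the group generated by the
translations `T_{(1,0,0)}, T_{(0,1,0)}, T_{(0,0,2)}` and `ρ_x`, `ρ_y`. -/
def GammaD : Subgroup (Equiv.Perm R3) :=
  Subgroup.closure {transl (1, 0, 0), transl (0, 1, 0), transl (0, 0, 2), rhoxE, rhoyE}

end


/-- Diagonal-sign affine bijections of `ℝ³`: `(x,y,z) ↦ (e₁x+b₁, e₂y+b₂, e₃z+b₃)`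
with each `eᵢ = ±1`. -/
def DiagAff : Subgroup (Equiv.Perm R3) where
  carrier := {g | ∃ e₁ e₂ e₃ b₁ b₂ b₃ : ℝ, (e₁ = 1 ∨ e₁ = -1) ∧ (e₂ = 1 ∨ e₂ = -1) ∧
    (e₃ = 1 ∨ e₃ = -1) ∧
    ∀ p : R3, g p = (e₁ * p.1 + b₁, e₂ * p.2.1 + b₂, e₃ * p.2.2 + b₃)}
  one_mem' := ⟨1, 1, 1, 0, 0, 0, Or.inl rfl, Or.inl rfl, Or.inl rfl, fun p => by simp⟩
  mul_mem' := by
    rintro g h ⟨e₁, e₂, e₃, b₁, b₂, b₃, he₁, he₂, he₃, hg⟩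
      ⟨f₁, f₂, f₃, c₁, c₂, c₃, hf₁, hf₂, hf₃, hh⟩
    refine ⟨e₁ * f₁, e₂ * f₂, e₃ * f₃, e₁ * c₁ + b₁, e₂ * c₂ + b₂, e₃ * c₃ + b₃,
      ?_, ?_, ?_, fun p => ?_⟩
    · rcases he₁ with h | h <;> rcases hf₁ with h' | h' <;> simp [h, h']
    · rcases he₂ with h | h <;> rcases hf₂ with h' | h' <;> simp [h, h']
    · rcases he₃ with h | h <;> rcases hf₃ with h' | h' <;> simp [h, h']
    · have hmul : (g * h) p = g (h p) := rfl
      rw [hmul, hh, hg]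
      dsimp only
      refine Prod.ext (by ring) (Prod.ext (by ring) (by ring))
  inv_mem' := by
    rintro g ⟨e₁, e₂, e₃, b₁, b₂, b₃, he₁, he₂, he₃, hg⟩
    refine ⟨e₁, e₂, e₃, -(e₁ * b₁), -(e₂ * b₂), -(e₃ * b₃), he₁, he₂, he₃, fun p => ?_⟩
    apply g.injective
    rw [show g (g⁻¹ p) = p from Equiv.apply_symm_apply g p, hg]
    dsimp only
    symm
    have h1 : e₁ * e₁ = 1 := by rcases he₁ with h | h <;> rw [h] <;> norm_num
    have h2 : e₂ * e₂ = 1 := by rcases he₂ with h | h <;> rw [h] <;> norm_num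
    have h3 : e₃ * e₃ = 1 := by rcases he₃ with h | h <;> rw [h] <;> norm_num
    refine Prod.ext ?_ (Prod.ext ?_ ?_) <;> dsimp only
    · calc e₁ * (e₁ * p.1 + -(e₁ * b₁)) + b₁ = e₁ * e₁ * p.1 - e₁ * e₁ * b₁ + b₁ := by ring
        _ = p.1 := by rw [h1]; ring
    · calc e₂ * (e₂ * p.2.1 + -(e₂ * b₂)) + b₂ = e₂ * e₂ * p.2.1 - e₂ * e₂ * b₂ + b₂ := by ring
        _ = p.2.1 := by rw [h2]; ring
    · calc e₃ * (e₃ * p.2.2 + -(e₃ * b₃)) + b₃ = e₃ * e₃ * p.2.2 - e₃ * e₃ * b₃ + b₃ := by ring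
        _ = p.2.2 := by rw [h3]; ring

lemma transl_apply (w p : R3) : transl w p = p + w := rfl

lemma transl_mem_diagAff (w : R3) : transl w ∈ DiagAff :=
  ⟨1, 1, 1, w.1, w.2.1, w.2.2, Or.inl rfl, Or.inl rfl, Or.inl rfl, fun p => by
    rw [transl_apply]
    refine Prod.ext (by simp) (Prod.ext (by simp [Prod.snd_add]) (by simp [Prod.snd_add]))⟩

lemma gammaD_le_diagAff : GammaD ≤ DiagAff := by
  rw [GammaD, Subgroup.closure_le]
  rintro g (rfl | rfl | rfl | rfl | rfl)
  · exact transl_mem_diagAff _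
  · exact transl_mem_diagAff _
  · exact transl_mem_diagAff _
  · exact ⟨1, -1, -1, 1/2, 0, 0, Or.inl rfl, Or.inr rfl, Or.inr rfl, fun p => by
      show (p.1 + 1/2, -p.2.1, -p.2.2) = _
      refine Prod.ext (by ring) (Prod.ext (by ring) (by ring))⟩
  · exact ⟨-1, 1, -1, 0, 1/2, 1, Or.inr rfl, Or.inl rfl, Or.inr rfl, fun p => by
      show (-p.1, p.2.1 + 1/2, 1 - p.2.2) = _
      refine Prod.ext (by ring) (Prod.ext (by ring) (by ring))⟩

lemma transl_comm (v w : R3) : transl v * transl w = transl w * transl v := by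
  refine Equiv.ext fun p => ?_
  show transl v (transl w p) = transl w (transl v p)
  simp only [transl_apply]
  abel

lemma tau_comm : tauE * transl (0, 0, 2) = transl (0, 0, 2) * tauE := by
  refine Equiv.ext fun p => ?_
  show tauE (p + (0, 0, 2)) = tauE p + (0, 0, 2)
  show ((-(p + ((0:ℝ), (0:ℝ), (2:ℝ))).2.1, (p + ((0:ℝ), (0:ℝ), (2:ℝ))).1,
      (p + ((0:ℝ), (0:ℝ), (2:ℝ))).2.2 + 1/2) : R3) = (-p.2.1, p.1, p.2.2 + 1/2) + (0, 0, 2)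
  refine Prod.ext ?_ (Prod.ext ?_ ?_) <;>
    simp [Prod.fst_add, Prod.snd_add] <;> ring

lemma vert_central : ∀ g ∈ GammaT, transl (0, 0, 2) * g = g * transl (0, 0, 2) := by
  have h : GammaT ≤ Subgroup.centralizer {transl (0, 0, 2)} := by
    rw [GammaT, Subgroup.closure_le]
    rintro g (rfl | rfl | rfl | rfl) <;>
      rw [SetLike.mem_coe, Subgroup.mem_centralizer_singleton_iff]
    · exact transl_comm _ _
    · exact transl_comm _ _
    · exact tau_comm
  intro g hg
  exact ((Subgroup.mem_centralizer_singleton_iff).mp (h hg)).symm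

lemma vert_mem : transl (0, 0, 2) ∈ GammaT :=
  Subgroup.subset_closure (Or.inr (Or.inr (Or.inl rfl)))

lemma gen_mem_gammaD_1 : transl (1, 0, 0) ∈ GammaD := Subgroup.subset_closure (Or.inl rfl)
lemma gen_mem_gammaD_2 : transl (0, 1, 0) ∈ GammaD :=
  Subgroup.subset_closure (Or.inr (Or.inl rfl))
lemma gen_mem_gammaD_3 : transl (0, 0, 2) ∈ GammaD :=
  Subgroup.subset_closure (Or.inr (Or.inr (Or.inl rfl)))
lemma gen_mem_gammaD_4 : rhoxE ∈ GammaD :=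
  Subgroup.subset_closure (Or.inr (Or.inr (Or.inr (Or.inl rfl))))
lemma gen_mem_gammaD_5 : rhoyE ∈ GammaD :=
  Subgroup.subset_closure (Or.inr (Or.inr (Or.inr (Or.inr rfl))))

/-- the groups `Γ_T` and `Γ_D` are not isomorphic (hence Tetra and Didi
are not homeomorphic, in particular not isometric). -/
theorem gammaT_not_iso_gammaD : IsEmpty (↥GammaT ≃* ↥GammaD) := by
  constructor
  intro φ
  set T : GammaT := ⟨transl (0, 0, 2), vert_mem⟩ with hT
  -- the image of the central element T is central in Γ_D
  have hcent : ∀ h : GammaD, φ T * h = h * φ T := by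
    intro h
    have hc : T * φ.symm h = φ.symm h * T :=
      Subtype.ext (vert_central (φ.symm h : GammaT) (φ.symm h).2)
    calc φ T * h = φ T * φ (φ.symm h) := by rw [φ.apply_symm_apply]
      _ = φ (T * φ.symm h) := (map_mul φ _ _).symm
      _ = φ (φ.symm h * T) := by rw [hc]
      _ = φ (φ.symm h) * φ T := map_mul φ _ _
      _ = h * φ T := by rw [φ.apply_symm_apply]
  -- the image is a diagonal-sign affine map
  obtain ⟨e₁, e₂, e₃, b₁, b₂, b₃, he₁, he₂, he₃, hu⟩ := gammaD_le_diagAff (φ T).2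
  -- pointwise commutation with elements of Γ_D
  have key : ∀ (h : Equiv.Perm R3), h ∈ GammaD → ∀ p : R3,
      (φ T : Equiv.Perm R3) (h p) = h ((φ T : Equiv.Perm R3) p) := by
    intro h hm p
    have h1 := hcent ⟨h, hm⟩
    have h2 : ((φ T : Equiv.Perm R3) * h) = (h * (φ T : Equiv.Perm R3)) :=
      congrArg Subtype.val h1
    exact congrFun (congrArg (fun e : Equiv.Perm R3 => (e : R3 → R3)) h2) p
  -- commuting with the three translations forces e₁ = e₂ = e₃ = 1
  have k1 := key _ gen_mem_gammaD_1 (0, 0, 0)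
  have k2 := key _ gen_mem_gammaD_2 (0, 0, 0)
  have k3 := key _ gen_mem_gammaD_3 (0, 0, 0)
  rw [transl_apply, transl_apply, hu, hu] at k1 k2 k3
  have e1 : e₁ = 1 := by
    have h := congrArg Prod.fst k1
    simp only [Prod.fst_add] at h
    norm_num at h
    linarith
  have e2 : e₂ = 1 := by
    have h := congrArg (fun q : R3 => q.2.1) k2
    simp only [Prod.snd_add, Prod.fst_add] at h
    norm_num at h
    linarith
  have e3 : e₃ = 1 := by
    have h := congrArg (fun q : R3 => q.2.2) k3
    simp only [Prod.snd_add] at h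
    norm_num at h
    linarith
  -- commuting with ρ_x and ρ_y forces b = 0
  have k4 := key _ gen_mem_gammaD_4 (0, 0, 0)
  have k5 := key _ gen_mem_gammaD_5 (0, 0, 0)
  have hrx : rhoxE ((0, 0, 0) : R3) = ((1/2, 0, 0) : R3) := by
    show (((0:ℝ) + 1/2, -(0:ℝ), -(0:ℝ)) : R3) = _
    norm_num
  have hry : rhoyE ((0, 0, 0) : R3) = ((0, 1/2, 1) : R3) := by
    show ((-(0:ℝ), (0:ℝ) + 1/2, 1 - (0:ℝ)) : R3) = _
    norm_num
  rw [hrx, hu, hu] at k4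
  rw [hry, hu, hu] at k5
  have hrx2 : ∀ q : R3, rhoxE q = (q.1 + 1/2, -q.2.1, -q.2.2) := fun q => rfl
  have hry2 : ∀ q : R3, rhoyE q = (-q.1, q.2.1 + 1/2, 1 - q.2.2) := fun q => rfl
  rw [hrx2] at k4
  rw [hry2] at k5
  have b2 : b₂ = 0 := by
    have h := congrArg (fun q : R3 => q.2.1) k4
    norm_num at h
    linarith
  have b3 : b₃ = 0 := by
    have h := congrArg (fun q : R3 => q.2.2) k4
    norm_num at h
    linarith
  have b1 : b₁ = 0 := by
    have h := congrArg Prod.fst k5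
    norm_num at h
    linarith
  -- hence φ T = 1, contradicting injectivity of φ (since T ≠ 1)
  have hu1 : (φ T : Equiv.Perm R3) = 1 := by
    refine Equiv.ext fun p => ?_
    rw [hu, e1, e2, e3, b1, b2, b3]
    show ((1 * p.1 + 0, 1 * p.2.1 + 0, 1 * p.2.2 + 0) : R3) = p
    refine Prod.ext (by ring) (Prod.ext (by ring) (by ring))
  have hφT : φ T = 1 := Subtype.ext hu1
  have hT1 : T = 1 := φ.injective (by rw [hφT, map_one])
  have hval : transl (0, 0, 2) = (1 : Equiv.Perm R3) := congrArg Subtype.val hT1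
  have hp : ((0, 0, 0) : R3) + (0, 0, 2) = (0, 0, 0) := by
    rw [← transl_apply, hval]; rfl
  have := congrArg (fun q : R3 => q.2.2) hp
  norm_num [Prod.snd_add] at this
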